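/- The left Haar measure on the SSR group G is ds dx dy db dr/r³ and the right Haar measure is ds dx dy db dr/r; consequently G is non-unimodular with modular function Δ(s,x,y,b,r) = 1/r². -/

import Mathlib

open MeasureTheory ENNReal

/-- The SSR multiplication written on ℝ⁵ (meaningful on the set where r > 0). -/
noncomputable def ssrMul5 (g g' : ℝ × ℝ × ℝ × ℝ × ℝ) : ℝ × ℝ × ℝ × ℝ × ℝ :=
  (g.1 + g'.1 + g.2.1 * (g.2.2.2.2⁻¹ * g'.2.2.1)
      - g.2.2.2.1 * (g.2.2.2.2⁻¹ * g'.2.2.1) ^ 2 / 2,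
   g.2.1 + g.2.2.2.2 * g'.2.1 - g.2.2.2.1 * (g.2.2.2.2⁻¹ * g'.2.2.1),
   g.2.2.1 + g.2.2.2.2⁻¹ * g'.2.2.1,
   g.2.2.2.1 + g'.2.2.2.1 * g.2.2.2.2 ^ 2,
   g.2.2.2.2 * g'.2.2.2.2)

/-- Integration against the left Haar measure ds dx dy db dr/r³. -/
noncomputable def leftHaarInt (f : ℝ × ℝ × ℝ × ℝ × ℝ → ℝ≥0∞) : ℝ≥0∞ :=
  ∫⁻ p in {p : ℝ × ℝ × ℝ × ℝ × ℝ | 0 < p.2.2.2.2},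
    f p * ENNReal.ofReal (1 / p.2.2.2.2 ^ 3)

/-- Integration against the right Haar measure ds dx dy db dr/r. -/
noncomputable def rightHaarInt (f : ℝ × ℝ × ℝ × ℝ × ℝ → ℝ≥0∞) : ℝ≥0∞ :=
  ∫⁻ p in {p : ℝ × ℝ × ℝ × ℝ × ℝ | 0 < p.2.2.2.2},
    f p * ENNReal.ofReal (1 / p.2.2.2.2)
noncomputable def affEquiv (c : ℝ) (hc : c ≠ 0) (d : ℝ) : ℝ ≃ᵐ ℝ where
  toFun := fun s => c * s + d
  invFun := fun t => (t - d) / c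
  left_inv := fun s => by field_simp; ring
  right_inv := fun t => by field_simp; ring
  measurable_toFun := (measurable_const_mul c).add_const d
  measurable_invFun := (measurable_id.sub_const d).div_const c

lemma lintegral_comp_affine (c : ℝ) (hc : c ≠ 0) (d : ℝ) (G : ℝ → ℝ≥0∞) :
    ∫⁻ s : ℝ, G (c * s + d) = ENNReal.ofReal |c⁻¹| * ∫⁻ s, G s := by
  have hmap : (volume : Measure ℝ).map (affEquiv c hc d) = ENNReal.ofReal |c⁻¹| • volume := by
    have h1 : ((affEquiv c hc d : ℝ ≃ᵐ ℝ) : ℝ → ℝ) = (fun t => t + d) ∘ (fun s : ℝ => c * s) := rfl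
    rw [h1, ← Measure.map_map (measurable_add_const d) (measurable_const_mul c),
      Real.map_volume_mul_left hc, Measure.map_smul]
    congr 1
    exact map_add_right_eq_self volume d
  calc ∫⁻ s, G (c * s + d) = ∫⁻ t, G t ∂((volume : Measure ℝ).map (affEquiv c hc d)) :=
        (lintegral_map_equiv G (affEquiv c hc d)).symm
    _ = _ := by rw [hmap, lintegral_smul_measure, smul_eq_mul]

lemma lintegral_prod_eq {β : Type*} [MeasureSpace β] [SFinite (volume : Measure β)]
    (F : ℝ × β → ℝ≥0∞) (hF : Measurable F) :
    ∫⁻ p : ℝ × β, F p = ∫⁻ w : β, ∫⁻ s : ℝ, F (s, w) := by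
  rw [Measure.volume_eq_prod, lintegral_prod_symm _ hF.aemeasurable]

lemma lintegral_step {β : Type*} [MeasureSpace β] [SFinite (volume : Measure β)]
    (c : ℝ) (hc : c ≠ 0) (d : β → ℝ) (T : β → β)
    (F : ℝ × β → ℝ≥0∞)
    (hmeas : Measurable fun p : ℝ × β => F (c * p.1 + d p.2, T p.2)) :
    ∫⁻ p : ℝ × β, F (c * p.1 + d p.2, T p.2) =
      ENNReal.ofReal |c⁻¹| * ∫⁻ w : β, ∫⁻ s : ℝ, F (s, T w) := by
  rw [lintegral_prod_eq _ hmeas]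
  calc ∫⁻ w, ∫⁻ s, F (c * s + d w, T w)
      = ∫⁻ w, ENNReal.ofReal |c⁻¹| * ∫⁻ s, F (s, T w) :=
        lintegral_congr fun w => lintegral_comp_affine c hc (d w) (fun t => F (t, T w))
    _ = _ := lintegral_const_mul' _ _ ofReal_ne_top

lemma left_jac (g : ℝ × ℝ × ℝ × ℝ × ℝ) (hg : 0 < g.2.2.2.2)
    (F : ℝ × ℝ × ℝ × ℝ × ℝ → ℝ≥0∞) (hF : Measurable F) :
    ∫⁻ p : ℝ × ℝ × ℝ × ℝ × ℝ, F (ssrMul5 g p)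
      = ENNReal.ofReal ((g.2.2.2.2 ^ 3)⁻¹) * ∫⁻ p, F p := by
  obtain ⟨s₀, x₀, y₀, b₀, R⟩ := g
  have hg' : (0:ℝ) < R := hg
  have hR : R ≠ 0 := ne_of_gt hg'
  -- measurability of partial integrals
  have hG4 : Measurable fun w : ℝ × ℝ × ℝ × ℝ => ∫⁻ s : ℝ, F (s, w) :=
    hF.lintegral_prod_left'
  have hG3 : Measurable fun v : ℝ × ℝ × ℝ => ∫⁻ x : ℝ, ∫⁻ s : ℝ, F (s, (x, v)) :=
    hG4.lintegral_prod_left'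
  have hG2 : Measurable fun u : ℝ × ℝ => ∫⁻ y : ℝ, ∫⁻ x : ℝ, ∫⁻ s : ℝ, F (s, (x, (y, u))) :=
    hG3.lintegral_prod_left'
  have hG1 : Measurable fun r : ℝ => ∫⁻ b : ℝ, ∫⁻ y : ℝ, ∫⁻ x : ℝ, ∫⁻ s : ℝ, F (s, (x, (y, (b, r)))) :=
    hG2.lintegral_prod_left'
  have hform : ∀ p : ℝ × ℝ × ℝ × ℝ × ℝ, ssrMul5 (s₀, x₀, y₀, b₀, R) p =
      (1 * p.1 + (s₀ + x₀ * (R⁻¹ * p.2.2.1) - b₀ * (R⁻¹ * p.2.2.1) ^ 2 / 2),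
        (R * p.2.1 + (x₀ - b₀ * (R⁻¹ * p.2.2.1)),
          (R⁻¹ * p.2.2.1 + y₀, (R ^ 2 * p.2.2.2.1 + b₀, R * p.2.2.2.2 + 0)))) := by
    intro p
    simp only [ssrMul5, Prod.mk.injEq]
    refine ⟨by ring, by ring, by ring, by ring, by ring⟩
  have h1 : ∫⁻ p : ℝ × ℝ × ℝ × ℝ × ℝ, F (ssrMul5 (s₀, x₀, y₀, b₀, R) p)
      = ∫⁻ p : ℝ × ℝ × ℝ × ℝ × ℝ,
          F (1 * p.1 + (s₀ + x₀ * (R⁻¹ * p.2.2.1) - b₀ * (R⁻¹ * p.2.2.1) ^ 2 / 2),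
            (R * p.2.1 + (x₀ - b₀ * (R⁻¹ * p.2.2.1)),
              (R⁻¹ * p.2.2.1 + y₀, (R ^ 2 * p.2.2.2.1 + b₀, R * p.2.2.2.2 + 0)))) :=
    lintegral_congr fun p => by rw [hform p]
  have h2 : ∫⁻ p : ℝ × ℝ × ℝ × ℝ × ℝ,
          F (1 * p.1 + (s₀ + x₀ * (R⁻¹ * p.2.2.1) - b₀ * (R⁻¹ * p.2.2.1) ^ 2 / 2),
            (R * p.2.1 + (x₀ - b₀ * (R⁻¹ * p.2.2.1)),
              (R⁻¹ * p.2.2.1 + y₀, (R ^ 2 * p.2.2.2.1 + b₀, R * p.2.2.2.2 + 0))))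
      = ENNReal.ofReal |(1:ℝ)⁻¹| * ∫⁻ w : ℝ × ℝ × ℝ × ℝ, ∫⁻ s : ℝ,
          F (s, (R * w.1 + (x₀ - b₀ * (R⁻¹ * w.2.1)),
              (R⁻¹ * w.2.1 + y₀, (R ^ 2 * w.2.2.1 + b₀, R * w.2.2.2 + 0)))) :=
    lintegral_step 1 one_ne_zero
      (fun w => s₀ + x₀ * (R⁻¹ * w.2.1) - b₀ * (R⁻¹ * w.2.1) ^ 2 / 2)
      (fun w => (R * w.1 + (x₀ - b₀ * (R⁻¹ * w.2.1)),
          (R⁻¹ * w.2.1 + y₀, (R ^ 2 * w.2.2.1 + b₀, R * w.2.2.2 + 0))))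
      F (by fun_prop)
  have h3 : ∫⁻ w : ℝ × ℝ × ℝ × ℝ, ∫⁻ s : ℝ,
          F (s, (R * w.1 + (x₀ - b₀ * (R⁻¹ * w.2.1)),
              (R⁻¹ * w.2.1 + y₀, (R ^ 2 * w.2.2.1 + b₀, R * w.2.2.2 + 0))))
      = ENNReal.ofReal |R⁻¹| * ∫⁻ v : ℝ × ℝ × ℝ, ∫⁻ x : ℝ, ∫⁻ s : ℝ,
          F (s, (x, (R⁻¹ * v.1 + y₀, (R ^ 2 * v.2.1 + b₀, R * v.2.2 + 0)))) :=
    lintegral_step R hR (fun v => x₀ - b₀ * (R⁻¹ * v.1))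
      (fun v => (R⁻¹ * v.1 + y₀, (R ^ 2 * v.2.1 + b₀, R * v.2.2 + 0)))
      (fun q : ℝ × (ℝ × ℝ × ℝ) => ∫⁻ s : ℝ, F (s, q)) (hG4.comp (by fun_prop))
  have h4 : ∫⁻ v : ℝ × ℝ × ℝ, ∫⁻ x : ℝ, ∫⁻ s : ℝ,
          F (s, (x, (R⁻¹ * v.1 + y₀, (R ^ 2 * v.2.1 + b₀, R * v.2.2 + 0))))
      = ENNReal.ofReal |R⁻¹⁻¹| * ∫⁻ u : ℝ × ℝ, ∫⁻ y : ℝ, ∫⁻ x : ℝ, ∫⁻ s : ℝ,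
          F (s, (x, (y, (R ^ 2 * u.1 + b₀, R * u.2 + 0)))) :=
    lintegral_step R⁻¹ (inv_ne_zero hR) (fun _ => y₀)
      (fun u => (R ^ 2 * u.1 + b₀, R * u.2 + 0))
      (fun q : ℝ × (ℝ × ℝ) => ∫⁻ x : ℝ, ∫⁻ s : ℝ, F (s, (x, q))) (hG3.comp (by fun_prop))
  have h5 : ∫⁻ u : ℝ × ℝ, ∫⁻ y : ℝ, ∫⁻ x : ℝ, ∫⁻ s : ℝ,
          F (s, (x, (y, (R ^ 2 * u.1 + b₀, R * u.2 + 0))))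
      = ENNReal.ofReal |(R ^ 2)⁻¹| * ∫⁻ r : ℝ, ∫⁻ b : ℝ, ∫⁻ y : ℝ, ∫⁻ x : ℝ, ∫⁻ s : ℝ,
          F (s, (x, (y, (b, R * r + 0)))) :=
    lintegral_step (R ^ 2) (pow_ne_zero 2 hR) (fun _ => b₀)
      (fun r => R * r + 0)
      (fun q : ℝ × ℝ => ∫⁻ y : ℝ, ∫⁻ x : ℝ, ∫⁻ s : ℝ, F (s, (x, (y, q)))) (hG2.comp (by fun_prop))
  have h6 : ∫⁻ r : ℝ, ∫⁻ b : ℝ, ∫⁻ y : ℝ, ∫⁻ x : ℝ, ∫⁻ s : ℝ,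
          F (s, (x, (y, (b, R * r + 0))))
      = ENNReal.ofReal |R⁻¹| * ∫⁻ r : ℝ, ∫⁻ b : ℝ, ∫⁻ y : ℝ, ∫⁻ x : ℝ, ∫⁻ s : ℝ,
          F (s, (x, (y, (b, r)))) :=
    lintegral_comp_affine R hR 0
      (fun r => ∫⁻ b : ℝ, ∫⁻ y : ℝ, ∫⁻ x : ℝ, ∫⁻ s : ℝ, F (s, (x, (y, (b, r)))))
  have hb : ∫⁻ p : ℝ × ℝ × ℝ × ℝ × ℝ, F p
      = ∫⁻ r : ℝ, ∫⁻ b : ℝ, ∫⁻ y : ℝ, ∫⁻ x : ℝ, ∫⁻ s : ℝ, F (s, (x, (y, (b, r)))) := by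
    rw [lintegral_prod_eq F hF]
    rw [lintegral_prod_eq (fun w : ℝ × ℝ × ℝ × ℝ => ∫⁻ s : ℝ, F (s, w)) hG4]
    rw [lintegral_prod_eq (fun v : ℝ × ℝ × ℝ => ∫⁻ x : ℝ, ∫⁻ s : ℝ, F (s, (x, v))) hG3]
    rw [lintegral_prod_eq (fun u : ℝ × ℝ => ∫⁻ y : ℝ, ∫⁻ x : ℝ, ∫⁻ s : ℝ, F (s, (x, (y, u)))) hG2]
  rw [h1, h2, h3, h4, h5, h6, hb]
  have e1 : |(1:ℝ)⁻¹| = 1 := by norm_num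
  have e2 : |R⁻¹| = R⁻¹ := abs_of_pos (inv_pos.2 hg')
  have e3 : |R⁻¹⁻¹| = R := by rw [inv_inv]; exact abs_of_pos hg'
  have e4 : |(R ^ 2)⁻¹| = (R ^ 2)⁻¹ := abs_of_pos (inv_pos.2 (pow_pos hg' 2))
  rw [e1, e2, e3, e4]
  rw [← mul_assoc, ← mul_assoc, ← mul_assoc, ← mul_assoc]
  congr 1
  rw [ENNReal.ofReal_one, one_mul, ← ENNReal.ofReal_mul (by positivity),
    ← ENNReal.ofReal_mul (by positivity), ← ENNReal.ofReal_mul (by positivity)]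
  congr 1
  field_simp
lemma right_jac (g : ℝ × ℝ × ℝ × ℝ × ℝ) (hg : 0 < g.2.2.2.2)
    (F : ℝ × ℝ × ℝ × ℝ × ℝ → ℝ≥0∞) (hF : Measurable F) :
    ∫⁻ p : ℝ × ℝ × ℝ × ℝ × ℝ, F (ssrMul5 p g)
      = ENNReal.ofReal (g.2.2.2.2⁻¹) * ∫⁻ p, F p := by
  obtain ⟨s₀, x₀, y₀, b₀, R⟩ := g
  have hg' : (0:ℝ) < R := hg
  have hR : R ≠ 0 := ne_of_gt hg'
  have hG4 : Measurable fun w : ℝ × ℝ × ℝ × ℝ => ∫⁻ s : ℝ, F (s, w) :=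
    hF.lintegral_prod_left'
  have hG3 : Measurable fun v : ℝ × ℝ × ℝ => ∫⁻ x : ℝ, ∫⁻ s : ℝ, F (s, (x, v)) :=
    hG4.lintegral_prod_left'
  have hG2 : Measurable fun u : ℝ × ℝ => ∫⁻ y : ℝ, ∫⁻ x : ℝ, ∫⁻ s : ℝ, F (s, (x, (y, u))) :=
    hG3.lintegral_prod_left'
  have hform : ∀ p : ℝ × ℝ × ℝ × ℝ × ℝ, ssrMul5 p (s₀, x₀, y₀, b₀, R) =
      (1 * p.1 + (s₀ + p.2.1 * (p.2.2.2.2⁻¹ * y₀) - p.2.2.2.1 * (p.2.2.2.2⁻¹ * y₀) ^ 2 / 2),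
        (1 * p.2.1 + (p.2.2.2.2 * x₀ - p.2.2.2.1 * (p.2.2.2.2⁻¹ * y₀)),
          (1 * p.2.2.1 + p.2.2.2.2⁻¹ * y₀, (1 * p.2.2.2.1 + b₀ * p.2.2.2.2 ^ 2,
            R * p.2.2.2.2 + 0)))) := by
    intro p
    simp only [ssrMul5, Prod.mk.injEq]
    refine ⟨by ring, by ring, by ring, by ring, by ring⟩
  have h1 : ∫⁻ p : ℝ × ℝ × ℝ × ℝ × ℝ, F (ssrMul5 p (s₀, x₀, y₀, b₀, R))
      = ∫⁻ p : ℝ × ℝ × ℝ × ℝ × ℝ,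
          F (1 * p.1 + (s₀ + p.2.1 * (p.2.2.2.2⁻¹ * y₀) - p.2.2.2.1 * (p.2.2.2.2⁻¹ * y₀) ^ 2 / 2),
            (1 * p.2.1 + (p.2.2.2.2 * x₀ - p.2.2.2.1 * (p.2.2.2.2⁻¹ * y₀)),
              (1 * p.2.2.1 + p.2.2.2.2⁻¹ * y₀, (1 * p.2.2.2.1 + b₀ * p.2.2.2.2 ^ 2,
                R * p.2.2.2.2 + 0)))) :=
    lintegral_congr fun p => by rw [hform p]
  have h2 : ∫⁻ p : ℝ × ℝ × ℝ × ℝ × ℝ,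
          F (1 * p.1 + (s₀ + p.2.1 * (p.2.2.2.2⁻¹ * y₀) - p.2.2.2.1 * (p.2.2.2.2⁻¹ * y₀) ^ 2 / 2),
            (1 * p.2.1 + (p.2.2.2.2 * x₀ - p.2.2.2.1 * (p.2.2.2.2⁻¹ * y₀)),
              (1 * p.2.2.1 + p.2.2.2.2⁻¹ * y₀, (1 * p.2.2.2.1 + b₀ * p.2.2.2.2 ^ 2,
                R * p.2.2.2.2 + 0))))
      = ENNReal.ofReal |(1:ℝ)⁻¹| * ∫⁻ w : ℝ × ℝ × ℝ × ℝ, ∫⁻ s : ℝ,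
          F (s, (1 * w.1 + (w.2.2.2 * x₀ - w.2.2.1 * (w.2.2.2⁻¹ * y₀)),
              (1 * w.2.1 + w.2.2.2⁻¹ * y₀, (1 * w.2.2.1 + b₀ * w.2.2.2 ^ 2,
                R * w.2.2.2 + 0)))) :=
    lintegral_step 1 one_ne_zero
      (fun w => s₀ + w.1 * (w.2.2.2⁻¹ * y₀) - w.2.2.1 * (w.2.2.2⁻¹ * y₀) ^ 2 / 2)
      (fun w => (1 * w.1 + (w.2.2.2 * x₀ - w.2.2.1 * (w.2.2.2⁻¹ * y₀)),
          (1 * w.2.1 + w.2.2.2⁻¹ * y₀, (1 * w.2.2.1 + b₀ * w.2.2.2 ^ 2, R * w.2.2.2 + 0))))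
      F (by fun_prop)
  have h3 : ∫⁻ w : ℝ × ℝ × ℝ × ℝ, ∫⁻ s : ℝ,
          F (s, (1 * w.1 + (w.2.2.2 * x₀ - w.2.2.1 * (w.2.2.2⁻¹ * y₀)),
              (1 * w.2.1 + w.2.2.2⁻¹ * y₀, (1 * w.2.2.1 + b₀ * w.2.2.2 ^ 2,
                R * w.2.2.2 + 0))))
      = ENNReal.ofReal |(1:ℝ)⁻¹| * ∫⁻ v : ℝ × ℝ × ℝ, ∫⁻ x : ℝ, ∫⁻ s : ℝ,
          F (s, (x, (1 * v.1 + v.2.2⁻¹ * y₀, (1 * v.2.1 + b₀ * v.2.2 ^ 2,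
            R * v.2.2 + 0)))) :=
    lintegral_step 1 one_ne_zero
      (fun v => v.2.2 * x₀ - v.2.1 * (v.2.2⁻¹ * y₀))
      (fun v => (1 * v.1 + v.2.2⁻¹ * y₀, (1 * v.2.1 + b₀ * v.2.2 ^ 2, R * v.2.2 + 0)))
      (fun q : ℝ × (ℝ × ℝ × ℝ) => ∫⁻ s : ℝ, F (s, q)) (hG4.comp (by fun_prop))
  have h4 : ∫⁻ v : ℝ × ℝ × ℝ, ∫⁻ x : ℝ, ∫⁻ s : ℝ,
          F (s, (x, (1 * v.1 + v.2.2⁻¹ * y₀, (1 * v.2.1 + b₀ * v.2.2 ^ 2,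
            R * v.2.2 + 0))))
      = ENNReal.ofReal |(1:ℝ)⁻¹| * ∫⁻ u : ℝ × ℝ, ∫⁻ y : ℝ, ∫⁻ x : ℝ, ∫⁻ s : ℝ,
          F (s, (x, (y, (1 * u.1 + b₀ * u.2 ^ 2, R * u.2 + 0)))) :=
    lintegral_step 1 one_ne_zero (fun u => u.2⁻¹ * y₀)
      (fun u => (1 * u.1 + b₀ * u.2 ^ 2, R * u.2 + 0))
      (fun q : ℝ × (ℝ × ℝ) => ∫⁻ x : ℝ, ∫⁻ s : ℝ, F (s, (x, q))) (hG3.comp (by fun_prop))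
  have h5 : ∫⁻ u : ℝ × ℝ, ∫⁻ y : ℝ, ∫⁻ x : ℝ, ∫⁻ s : ℝ,
          F (s, (x, (y, (1 * u.1 + b₀ * u.2 ^ 2, R * u.2 + 0))))
      = ENNReal.ofReal |(1:ℝ)⁻¹| * ∫⁻ r : ℝ, ∫⁻ b : ℝ, ∫⁻ y : ℝ, ∫⁻ x : ℝ, ∫⁻ s : ℝ,
          F (s, (x, (y, (b, R * r + 0)))) :=
    lintegral_step 1 one_ne_zero (fun r => b₀ * r ^ 2)
      (fun r => R * r + 0)
      (fun q : ℝ × ℝ => ∫⁻ y : ℝ, ∫⁻ x : ℝ, ∫⁻ s : ℝ, F (s, (x, (y, q)))) (hG2.comp (by fun_prop))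
  have h6 : ∫⁻ r : ℝ, ∫⁻ b : ℝ, ∫⁻ y : ℝ, ∫⁻ x : ℝ, ∫⁻ s : ℝ,
          F (s, (x, (y, (b, R * r + 0))))
      = ENNReal.ofReal |R⁻¹| * ∫⁻ r : ℝ, ∫⁻ b : ℝ, ∫⁻ y : ℝ, ∫⁻ x : ℝ, ∫⁻ s : ℝ,
          F (s, (x, (y, (b, r)))) :=
    lintegral_comp_affine R hR 0
      (fun r => ∫⁻ b : ℝ, ∫⁻ y : ℝ, ∫⁻ x : ℝ, ∫⁻ s : ℝ, F (s, (x, (y, (b, r)))))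
  have hb : ∫⁻ p : ℝ × ℝ × ℝ × ℝ × ℝ, F p
      = ∫⁻ r : ℝ, ∫⁻ b : ℝ, ∫⁻ y : ℝ, ∫⁻ x : ℝ, ∫⁻ s : ℝ, F (s, (x, (y, (b, r)))) := by
    rw [lintegral_prod_eq F hF]
    rw [lintegral_prod_eq (fun w : ℝ × ℝ × ℝ × ℝ => ∫⁻ s : ℝ, F (s, w)) hG4]
    rw [lintegral_prod_eq (fun v : ℝ × ℝ × ℝ => ∫⁻ x : ℝ, ∫⁻ s : ℝ, F (s, (x, v))) hG3]
    rw [lintegral_prod_eq (fun u : ℝ × ℝ => ∫⁻ y : ℝ, ∫⁻ x : ℝ, ∫⁻ s : ℝ, F (s, (x, (y, u)))) hG2]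
  rw [h1, h2, h3, h4, h5, h6, hb]
  have e1 : |(1:ℝ)⁻¹| = 1 := by norm_num
  have e2 : |R⁻¹| = R⁻¹ := abs_of_pos (inv_pos.2 hg')
  rw [e1, e2, ENNReal.ofReal_one, one_mul, one_mul, one_mul, one_mul]

/-- ds dx dy db dr/r³ is a left Haar measure, ds dx dy db dr/r is a right Haar
measure, and the SSR group is non-unimodular with modular function
Δ(s,x,y,b,r) = 1/r² (so that right translation scales the left Haar measure by r²). -/
theorem ssr_haar_measures_and_modular_function
    (g : ℝ × ℝ × ℝ × ℝ × ℝ) (hg : 0 < g.2.2.2.2)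
    (f : ℝ × ℝ × ℝ × ℝ × ℝ → ℝ≥0∞) (hf : Measurable f) :
    leftHaarInt (fun p => f (ssrMul5 g p)) = leftHaarInt f ∧
    rightHaarInt (fun p => f (ssrMul5 p g)) = rightHaarInt f ∧
    leftHaarInt (fun p => f (ssrMul5 p g)) =
      (ENNReal.ofReal (1 / g.2.2.2.2 ^ 2))⁻¹ * leftHaarInt f := by
  set R := g.2.2.2.2 with hRdef
  have hR : R ≠ 0 := ne_of_gt hg
  set S : Set (ℝ × ℝ × ℝ × ℝ × ℝ) := {p | 0 < p.2.2.2.2} with hSdef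
  have hS : MeasurableSet S := measurableSet_lt measurable_const (by fun_prop)
  set F3 : ℝ × ℝ × ℝ × ℝ × ℝ → ℝ≥0∞ :=
    S.indicator (fun q => f q * ENNReal.ofReal (1 / q.2.2.2.2 ^ 3)) with hF3def
  set F1 : ℝ × ℝ × ℝ × ℝ × ℝ → ℝ≥0∞ :=
    S.indicator (fun q => f q * ENNReal.ofReal (1 / q.2.2.2.2)) with hF1def
  have hF3 : Measurable F3 :=
    (hf.mul (Measurable.ennreal_ofReal (by fun_prop))).indicator hS
  have hF1 : Measurable F1 :=
    (hf.mul (Measurable.ennreal_ofReal (by fun_prop))).indicator hS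
  have hL : ∀ h : ℝ × ℝ × ℝ × ℝ × ℝ → ℝ≥0∞, leftHaarInt h
      = ∫⁻ p, S.indicator (fun q => h q * ENNReal.ofReal (1 / q.2.2.2.2 ^ 3)) p :=
    fun h => (lintegral_indicator hS _).symm
  have hRt : ∀ h : ℝ × ℝ × ℝ × ℝ × ℝ → ℝ≥0∞, rightHaarInt h
      = ∫⁻ p, S.indicator (fun q => h q * ENNReal.ofReal (1 / q.2.2.2.2)) p :=
    fun h => (lintegral_indicator hS _).symm
  -- pointwise identity, left translation, weight 1/r³
  have key1 : ∀ p : ℝ × ℝ × ℝ × ℝ × ℝ,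
      S.indicator (fun q => f (ssrMul5 g q) * ENNReal.ofReal (1 / q.2.2.2.2 ^ 3)) p
        = ENNReal.ofReal (R ^ 3) * F3 (ssrMul5 g p) := by
    intro p
    have hr5 : (ssrMul5 g p).2.2.2.2 = R * p.2.2.2.2 := rfl
    by_cases hp : 0 < p.2.2.2.2
    · have hmem : ssrMul5 g p ∈ S := by
        show 0 < (ssrMul5 g p).2.2.2.2
        rw [hr5]; exact mul_pos hg hp
      rw [Set.indicator_of_mem (show p ∈ S from hp), hF3def, Set.indicator_of_mem hmem, hr5]
      have hc : ENNReal.ofReal (R ^ 3) * ENNReal.ofReal (1 / (R * p.2.2.2.2) ^ 3)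
          = ENNReal.ofReal (1 / p.2.2.2.2 ^ 3) := by
        rw [← ENNReal.ofReal_mul (by positivity)]
        congr 1
        field_simp
      rw [← mul_assoc, mul_comm (ENNReal.ofReal (R ^ 3)) (f (ssrMul5 g p)), mul_assoc, hc]
    · have hnmem : ssrMul5 g p ∉ S := by
        show ¬ 0 < (ssrMul5 g p).2.2.2.2
        rw [hr5]
        intro h
        exact hp (by nlinarith)
      rw [Set.indicator_of_notMem (show p ∉ S from hp), hF3def, Set.indicator_of_notMem hnmem, mul_zero]
  -- pointwise identity, right translation, weight 1/r
  have hr5' : ∀ p : ℝ × ℝ × ℝ × ℝ × ℝ, (ssrMul5 p g).2.2.2.2 = p.2.2.2.2 * R := fun p => rfl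
  have hiff : ∀ p : ℝ × ℝ × ℝ × ℝ × ℝ, (0 < p.2.2.2.2 * R ↔ 0 < p.2.2.2.2) :=
    fun p => ⟨fun h => by nlinarith, fun h => mul_pos h hg⟩
  have key2 : ∀ p : ℝ × ℝ × ℝ × ℝ × ℝ,
      S.indicator (fun q => f (ssrMul5 q g) * ENNReal.ofReal (1 / q.2.2.2.2)) p
        = ENNReal.ofReal R * F1 (ssrMul5 p g) := by
    intro p
    by_cases hp : 0 < p.2.2.2.2
    · have hmem : ssrMul5 p g ∈ S := by
        show 0 < (ssrMul5 p g).2.2.2.2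
        rw [hr5' p]; exact mul_pos hp hg
      rw [Set.indicator_of_mem (show p ∈ S from hp), hF1def, Set.indicator_of_mem hmem, hr5' p]
      have hc : ENNReal.ofReal R * ENNReal.ofReal (1 / (p.2.2.2.2 * R))
          = ENNReal.ofReal (1 / p.2.2.2.2) := by
        rw [← ENNReal.ofReal_mul (le_of_lt hg)]
        congr 1
        field_simp
      rw [← mul_assoc, mul_comm (ENNReal.ofReal R) (f (ssrMul5 p g)), mul_assoc, hc]
    · have hnmem : ssrMul5 p g ∉ S := by
        show ¬ 0 < (ssrMul5 p g).2.2.2.2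
        rw [hr5' p]
        exact fun h => hp ((hiff p).1 h)
      rw [Set.indicator_of_notMem (show p ∉ S from hp), hF1def, Set.indicator_of_notMem hnmem, mul_zero]
  -- pointwise identity, right translation, weight 1/r³
  have key3 : ∀ p : ℝ × ℝ × ℝ × ℝ × ℝ,
      S.indicator (fun q => f (ssrMul5 q g) * ENNReal.ofReal (1 / q.2.2.2.2 ^ 3)) p
        = ENNReal.ofReal (R ^ 3) * F3 (ssrMul5 p g) := by
    intro p
    by_cases hp : 0 < p.2.2.2.2
    · have hmem : ssrMul5 p g ∈ S := by
        show 0 < (ssrMul5 p g).2.2.2.2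
        rw [hr5' p]; exact mul_pos hp hg
      rw [Set.indicator_of_mem (show p ∈ S from hp), hF3def, Set.indicator_of_mem hmem, hr5' p]
      have hc : ENNReal.ofReal (R ^ 3) * ENNReal.ofReal (1 / (p.2.2.2.2 * R) ^ 3)
          = ENNReal.ofReal (1 / p.2.2.2.2 ^ 3) := by
        rw [← ENNReal.ofReal_mul (by positivity)]
        congr 1
        field_simp
      rw [← mul_assoc, mul_comm (ENNReal.ofReal (R ^ 3)) (f (ssrMul5 p g)), mul_assoc, hc]
    · have hnmem : ssrMul5 p g ∉ S := by
        show ¬ 0 < (ssrMul5 p g).2.2.2.2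
        rw [hr5' p]
        exact fun h => hp ((hiff p).1 h)
      rw [Set.indicator_of_notMem (show p ∉ S from hp), hF3def, Set.indicator_of_notMem hnmem, mul_zero]
  refine ⟨?_, ?_, ?_⟩
  · -- left invariance of the left Haar measure
    rw [hL (fun p => f (ssrMul5 g p)), hL f]
    calc ∫⁻ p, S.indicator (fun q => f (ssrMul5 g q) * ENNReal.ofReal (1 / q.2.2.2.2 ^ 3)) p
        = ∫⁻ p, ENNReal.ofReal (R ^ 3) * F3 (ssrMul5 g p) := lintegral_congr key1
      _ = ENNReal.ofReal (R ^ 3) * ∫⁻ p, F3 (ssrMul5 g p) :=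
          lintegral_const_mul' _ _ ofReal_ne_top
      _ = ENNReal.ofReal (R ^ 3) * (ENNReal.ofReal ((R ^ 3)⁻¹) * ∫⁻ p, F3 p) := by
          rw [left_jac g hg F3 hF3]
      _ = ∫⁻ p, F3 p := by
          rw [← mul_assoc, ← ENNReal.ofReal_mul (by positivity),
            mul_inv_cancel₀ (pow_ne_zero 3 hR), ENNReal.ofReal_one, one_mul]
  · -- right invariance of the right Haar measure
    rw [hRt (fun p => f (ssrMul5 p g)), hRt f]
    calc ∫⁻ p, S.indicator (fun q => f (ssrMul5 q g) * ENNReal.ofReal (1 / q.2.2.2.2)) p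
        = ∫⁻ p, ENNReal.ofReal R * F1 (ssrMul5 p g) := lintegral_congr key2
      _ = ENNReal.ofReal R * ∫⁻ p, F1 (ssrMul5 p g) := lintegral_const_mul' _ _ ofReal_ne_top
      _ = ENNReal.ofReal R * (ENNReal.ofReal R⁻¹ * ∫⁻ p, F1 p) := by
          rw [right_jac g hg F1 hF1]
      _ = ∫⁻ p, F1 p := by
          rw [← mul_assoc, ← ENNReal.ofReal_mul (le_of_lt hg),
            mul_inv_cancel₀ hR, ENNReal.ofReal_one, one_mul]
  · -- modular function
    rw [hL (fun p => f (ssrMul5 p g)), hL f]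
    have hmod : (ENNReal.ofReal (1 / R ^ 2))⁻¹ = ENNReal.ofReal (R ^ 2) := by
      rw [one_div, ENNReal.ofReal_inv_of_pos (pow_pos hg 2), inv_inv]
    rw [hmod]
    calc ∫⁻ p, S.indicator (fun q => f (ssrMul5 q g) * ENNReal.ofReal (1 / q.2.2.2.2 ^ 3)) p
        = ∫⁻ p, ENNReal.ofReal (R ^ 3) * F3 (ssrMul5 p g) := lintegral_congr key3
      _ = ENNReal.ofReal (R ^ 3) * ∫⁻ p, F3 (ssrMul5 p g) :=
          lintegral_const_mul' _ _ ofReal_ne_top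
      _ = ENNReal.ofReal (R ^ 3) * (ENNReal.ofReal R⁻¹ * ∫⁻ p, F3 p) := by
          rw [right_jac g hg F3 hF3]
      _ = ENNReal.ofReal (R ^ 2) * ∫⁻ p, F3 p := by
          rw [← mul_assoc, ← ENNReal.ofReal_mul (by positivity)]
          congr 2
          field_simp
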